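/- (Cameron) Let G be a finite permutation group on Ω. The set 𝓘(G,Ω) of cardinalities of irredundant bases for G on Ω is an interval of natural numbers: if a, b ∈ 𝓘(G,Ω) and a ≤ c ≤ b, then c ∈ 𝓘(G,Ω). -/

import Mathlib

/-- The pointwise stabilizer of a finite sequence of points. -/
def pStab (G : Type*) [Group G] {Ω : Type*} [MulAction G Ω] (l : List Ω) : Subgroup G :=
  ⨅ ω ∈ l, MulAction.stabilizer G ω

/-- `l` is an irredundant base: trivial pointwise stabilizer and a strictly
decreasing chain of successive pointwise stabilizers. -/
def IsIrrBase (G : Type*) [Group G] {Ω : Type*} [MulAction G Ω] (l : List Ω) : Prop :=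
  pStab G l = ⊥ ∧ ∀ i < l.length, pStab G (l.take (i + 1)) < pStab G (l.take i)

section Aux
variable (G : Type*) [Group G] {Ω : Type*} [MulAction G Ω]

def fld : Subgroup G → List Ω → Subgroup G
  | H, [] => H
  | H, x :: xs => fld (H ⊓ MulAction.stabilizer G x) xs

def Irr : Subgroup G → List Ω → Prop
  | _, [] => True
  | H, x :: xs => ¬ (H ≤ MulAction.stabilizer G x) ∧ Irr (H ⊓ MulAction.stabilizer G x) xs

open Classical in
noncomputable def red : Subgroup G → List Ω → List Ω
  | _, [] => []
  | H, x :: xs =>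
    if H ≤ MulAction.stabilizer G x then red H xs
    else x :: red (H ⊓ MulAction.stabilizer G x) xs

variable {G}

lemma pStab_nil : pStab G ([] : List Ω) = ⊤ := by simp [pStab]

lemma pStab_cons (x : Ω) (l : List Ω) :
    pStab G (x :: l) = MulAction.stabilizer G x ⊓ pStab G l := by
  simp [pStab, List.mem_cons, iInf_or, iInf_inf_eq]

lemma fld_eq (l : List Ω) : ∀ H : Subgroup G, fld G H l = H ⊓ pStab G l := by
  induction l with
  | nil => intro H; simp [fld, pStab_nil]
  | cons x xs ih => intro H; rw [fld, ih, pStab_cons, inf_assoc]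

lemma fld_append (u v : List Ω) : ∀ H : Subgroup G, fld G H (u ++ v) = fld G (fld G H u) v := by
  induction u with
  | nil => intro H; simp [fld]
  | cons x xs ih => intro H; rw [List.cons_append, fld, fld, ih]

lemma fld_red (l : List Ω) : ∀ H : Subgroup G, fld G H (red G H l) = fld G H l := by
  induction l with
  | nil => intro H; rw [red]
  | cons x xs ih =>
      intro H
      by_cases h : H ≤ MulAction.stabilizer G x
      · rw [red, if_pos h, ih, fld, inf_eq_left.2 h]
      · rw [red, if_neg h, fld, ih, fld]

lemma irr_red (l : List Ω) : ∀ H : Subgroup G, Irr G H (red G H l) := by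
  induction l with
  | nil => intro H; rw [red]; trivial
  | cons x xs ih =>
      intro H
      by_cases h : H ≤ MulAction.stabilizer G x
      · rw [red, if_pos h]; exact ih H
      · rw [red, if_neg h]; exact ⟨h, ih _⟩

lemma red_of_irr {l : List Ω} : ∀ {H : Subgroup G}, Irr G H l → red G H l = l := by
  induction l with
  | nil => intro H _; rw [red]
  | cons x xs ih =>
      intro H h
      rw [red, if_neg h.1, ih h.2]

lemma red_bot (l : List Ω) : red G (⊥ : Subgroup G) l = [] := by
  induction l with
  | nil => rw [red]
  | cons x xs ih => rw [red, if_pos bot_le]; exact ih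

lemma red_append (u v : List Ω) :
    ∀ H : Subgroup G, red G H (u ++ v) = red G H u ++ red G (fld G H u) v := by
  induction u with
  | nil => intro H; simp [red, fld]
  | cons x xs ih =>
      intro H
      by_cases h : H ≤ MulAction.stabilizer G x
      · rw [List.cons_append, red, if_pos h, red, if_pos h, fld, inf_eq_left.2 h, ih]
      · rw [List.cons_append, red, if_neg h, red, if_neg h, fld, List.cons_append, ih]

lemma red_length_mono (l : List Ω) :
    ∀ {H K : Subgroup G}, K ≤ H → (red G K l).length ≤ (red G H l).length := by
  induction l with
  | nil => intro H K _; simp [red]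
  | cons x xs ih =>
      intro H K hKH
      by_cases h : H ≤ MulAction.stabilizer G x
      · rw [red, red, if_pos h, if_pos (hKH.trans h)]; exact ih hKH
      · by_cases h' : K ≤ MulAction.stabilizer G x
        · rw [red, red, if_neg h, if_pos h']
          exact (ih (le_inf hKH h')).trans (Nat.le_succ _)
        · rw [red, red, if_neg h, if_neg h']
          simpa using ih (inf_le_inf_right _ hKH)

lemma red_insert (x : Ω) (v : List Ω) (u : List Ω) :
    ∀ H : Subgroup G,
      (red G H (u ++ x :: v)).length ≤ (red G H (u ++ v)).length + 1 := by
  induction u with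
  | nil =>
      intro H
      by_cases h : H ≤ MulAction.stabilizer G x
      · rw [List.nil_append, List.nil_append, red, if_pos h]
        exact Nat.le_succ_of_le (le_refl _)
      · rw [List.nil_append, List.nil_append, red, if_neg h]
        simpa using red_length_mono v inf_le_left
  | cons z zs ih =>
      intro H
      by_cases h : H ≤ MulAction.stabilizer G z
      · rw [List.cons_append, List.cons_append, red, if_pos h, red, if_pos h]; exact ih _
      · rw [List.cons_append, List.cons_append, red, if_neg h, red, if_neg h]
        simpa using ih _

lemma inf_lt_left_iff {H X : Subgroup G} : H ⊓ X < H ↔ ¬ H ≤ X := by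
  constructor
  · intro h hle
    rw [inf_eq_left.2 hle] at h
    exact lt_irrefl _ h
  · intro h
    exact lt_of_le_of_ne inf_le_left (fun e => h (by rw [← e]; exact inf_le_right))

lemma irr_iff (l : List Ω) :
    ∀ H : Subgroup G, Irr G H l ↔
      ∀ i < l.length, fld G H (l.take (i + 1)) < fld G H (l.take i) := by
  induction l with
  | nil => intro H; simp [Irr]
  | cons x xs ih =>
      intro H
      constructor
      · rintro ⟨h1, h2⟩ i hi
        match i with
        | 0 => simpa [fld] using h1
        | Nat.succ j =>
            have hj : j < xs.length := by simpa using hi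
            simpa [fld] using (ih _).1 h2 j hj
      · intro h
        constructor
        · have := h 0 (by simp)
          simpa [fld] using this
        · refine (ih _).2 (fun j hj => ?_)
          have := h (j + 1) (by simpa using hj)
          simpa [fld] using this

lemma isIrrBase_iff (l : List Ω) :
    IsIrrBase G l ↔ Irr G (⊤ : Subgroup G) l ∧ fld G (⊤ : Subgroup G) l = ⊥ := by
  have key : ∀ m : List Ω, fld G (⊤ : Subgroup G) m = pStab G m := by
    intro m; rw [fld_eq, top_inf_eq]
  rw [irr_iff]
  constructor
  · rintro ⟨h1, h2⟩
    exact ⟨fun i hi => by rw [key, key]; exact h2 i hi, by rw [key]; exact h1⟩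
  · rintro ⟨h1, h2⟩
    exact ⟨by rw [← key]; exact h2, fun i hi => by rw [← key, ← key]; exact h1 i hi⟩

lemma nat_ivt (h : ℕ → ℕ) (c : ℕ) :
    ∀ b, h 0 ≤ c → c ≤ h b → (∀ k < b, h (k + 1) ≤ h k + 1) → ∃ k ≤ b, h k = c := by
  intro b
  induction b with
  | zero => intro h0 hb _; exact ⟨0, le_refl _, le_antisymm h0 hb⟩
  | succ b ih =>
      intro h0 hb hstep
      by_cases hc : c ≤ h b
      · obtain ⟨k, hk, he⟩ := ih h0 hc (fun k hk => hstep k (by omega))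
        exact ⟨k, by omega, he⟩
      · refine ⟨b + 1, le_refl _, ?_⟩
        have := hstep b (by omega)
        omega

end Aux

/-- (Cameron) The set of cardinalities of irredundant bases of a finite
permutation group is an interval of natural numbers. -/
theorem irredundant_base_lengths_interval
    (G : Type*) [Group G] [Finite G] (Ω : Type*) [Finite Ω] [MulAction G Ω]
    [FaithfulSMul G Ω] (a b c : ℕ)
    (ha : ∃ l : List Ω, IsIrrBase G l ∧ l.length = a)
    (hb : ∃ l : List Ω, IsIrrBase G l ∧ l.length = b)
    (hac : a ≤ c) (hcb : c ≤ b) :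
    ∃ l : List Ω, IsIrrBase G l ∧ l.length = c := by
  obtain ⟨X, hX, hXa⟩ := ha
  obtain ⟨Y, hY, hYb⟩ := hb
  rw [isIrrBase_iff] at hX hY
  set h : ℕ → ℕ := fun k => (red G ⊤ (Y.take k ++ X)).length with hh
  have h0 : h 0 = a := by
    simp only [hh, List.take_zero, List.nil_append]
    rw [red_of_irr hX.1, hXa]
  have hbb : h b = b := by
    simp only [hh, ← hYb, List.take_length]
    rw [red_append, red_of_irr hY.1, hY.2, red_bot, List.append_nil, hYb]
  have hstep : ∀ k < b, h (k + 1) ≤ h k + 1 := by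
    intro k hk
    have hk' : k < Y.length := by omega
    have : Y.take (k + 1) = Y.take k ++ [Y.get ⟨k, hk'⟩] := by
      rw [← List.take_concat_get hk', List.concat_eq_append]; rfl
    simp only [hh, this, List.append_assoc, List.singleton_append]
    exact red_insert _ _ _ _
  obtain ⟨k, _, hkc⟩ := nat_ivt h c b (by omega) (by omega) hstep
  refine ⟨red G ⊤ (Y.take k ++ X), ?_, hkc⟩
  rw [isIrrBase_iff]
  refine ⟨irr_red _ _, ?_⟩
  rw [fld_red, fld_append, fld_eq]
  have : pStab G X = ⊥ := by rw [← top_inf_eq (pStab G X), ← fld_eq]; exact hX.2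
  rw [this, inf_bot_eq]
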